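/- Let f : ℝ^d → ℝ be convex and continuously differentiable with f(0) = 0 = min f. Let X : [0,∞) → ℝ^d be continuous, twice continuously differentiable on (0,∞), with X(0) = X₀ and Ẋ(t) → 0 as t → 0⁺, satisfying Ẍ(t) + (3/t)·Ẋ(t) + ∇f(X(t)) = 0 for all t > 0. Then f(X(t)) ≤ 2‖X₀‖²/t² for all t > 0. -/

import Mathlib

open Set Filter Topology
open scoped RealInnerProductSpace

/-- Gradient inequality for a convex differentiable function: `f x - f 0 ≤ ⟪∇f x, x⟫`. -/
lemma convex_grad_ineq (d : ℕ) (f : EuclideanSpace ℝ (Fin d) → ℝ)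
    (hconv : ConvexOn ℝ Set.univ f) (hf : ContDiff ℝ 1 f) (hf0 : f 0 = 0)
    (x : EuclideanSpace ℝ (Fin d)) : f x ≤ ⟪gradient f x, x⟫ := by
  have hfd : Differentiable ℝ f := hf.differentiable one_ne_zero
  have hc : ConvexOn ℝ univ (fun s : ℝ => f (s • x)) := by
    have := hconv.comp_linearMap (LinearMap.toSpanSingleton ℝ _ x)
    simpa [Function.comp_def, LinearMap.toSpanSingleton_apply] using this
  have hcx : HasDerivAt (fun s : ℝ => s • x) x 1 := by
    simpa using (hasDerivAt_id (1:ℝ)).smul_const x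
  have hD : HasDerivAt (fun s : ℝ => f (s • x)) ⟪gradient f x, x⟫ 1 := by
    have hfx : HasFDerivAt f ((InnerProductSpace.toDual ℝ (EuclideanSpace ℝ (Fin d)))
        (gradient f x)) ((1:ℝ) • x) := by
      simpa using ((hfd x).hasGradientAt.hasFDerivAt)
    have h1 := hfx.comp_hasDerivAt 1 hcx
    simpa [Function.comp_def, InnerProductSpace.toDual_apply_apply] using h1
  have := hc.slope_le_of_hasDerivAt (mem_univ (0:ℝ)) (mem_univ (1:ℝ)) one_pos hD
  simpa [slope, hf0] using this

/-- along a solution of the critical Nesterov flow for a convex `C¹`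
potential `f` with `f(0) = 0 = min f`, one has `f(X(t)) ≤ 2‖X₀‖²/t²` for all `t > 0`. -/
theorem nesterov_function_value_rate (d : ℕ)
    (f : EuclideanSpace ℝ (Fin d) → ℝ)
    (hconv : ConvexOn ℝ Set.univ f) (hf : ContDiff ℝ 1 f)
    (hf0 : f 0 = 0) (hmin : ∀ x, 0 ≤ f x)
    (X₀ : EuclideanSpace ℝ (Fin d)) (X X' X'' : ℝ → EuclideanSpace ℝ (Fin d))
    (hXcont : ContinuousOn X (Set.Ici 0))
    (hX' : ∀ t > (0:ℝ), HasDerivAt X (X' t) t)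
    (hX'' : ∀ t > (0:ℝ), HasDerivAt X' (X'' t) t)
    (hX''cont : ContinuousOn X'' (Set.Ioi 0))
    (hX0 : X 0 = X₀)
    (hX'0 : Filter.Tendsto X' (nhdsWithin 0 (Set.Ioi 0)) (nhds 0))
    (hODE : ∀ t > (0:ℝ), X'' t + (3 / t) • X' t + gradient f (X t) = 0) :
    ∀ t > (0:ℝ), f (X t) ≤ 2 * ‖X₀‖ ^ 2 / t ^ 2 := by
  have hfd : Differentiable ℝ f := hf.differentiable one_ne_zero
  set g : EuclideanSpace ℝ (Fin d) → EuclideanSpace ℝ (Fin d) := gradient f with hgdef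
  set Y : ℝ → EuclideanSpace ℝ (Fin d) := fun s => X s + (s/2) • X' s with hYdef
  set E : ℝ → ℝ := fun s => s^2 * f (X s) + 2 * ⟪Y s, Y s⟫ with hEdef
  -- derivative of E
  have hE : ∀ s > (0:ℝ), HasDerivAt E (2*s*(f (X s) - ⟪g (X s), X s⟫)) s := by
    intro s hs
    have hXs := hX' s hs
    -- derivative of f ∘ X
    have hfXs : HasDerivAt (fun u => f (X u)) ⟪g (X s), X' s⟫ s := by
      have hfx : HasFDerivAt f ((InnerProductSpace.toDual ℝ (EuclideanSpace ℝ (Fin d)))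
          (g (X s))) (X s) := (hfd (X s)).hasGradientAt.hasFDerivAt
      simpa [Function.comp_def, InnerProductSpace.toDual_apply_apply] using hfx.comp_hasDerivAt s hXs
    have h1 : HasDerivAt (fun u => u^2 * f (X u))
        (2 * s * f (X s) + s^2 * ⟪g (X s), X' s⟫) s := by
      simpa [Pi.mul_def] using (hasDerivAt_pow 2 s).mul hfXs
    -- derivative of Y
    have hY : HasDerivAt Y (-((s/2) • g (X s))) s := by
      have h2 : HasDerivAt (fun u : ℝ => (u/2) • X' u)
          ((s/2) • X'' s + ((1:ℝ)/2) • X' s) s := by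
        have hc : HasDerivAt (fun u : ℝ => u/2) ((1:ℝ)/2) s :=
          (hasDerivAt_id s).div_const 2
        exact hc.smul (hX'' s hs)
      have h3 := hXs.add h2
      have hode := hODE s hs
      have hX''eq : X'' s = -((3/s) • X' s + g (X s)) := by
        rw [add_assoc] at hode
        exact eq_neg_of_add_eq_zero_left hode
      have heq : X' s + ((s/2) • X'' s + ((1:ℝ)/2) • X' s) = -((s/2) • g (X s)) := by
        have hs32 : (s/2) * (3/s) = 3/2 := by field_simp
        rw [hX''eq, smul_neg, smul_add, smul_smul, hs32]
        module
      rwa [heq] at h3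
    have h4 : HasDerivAt (fun u => ⟪Y u, Y u⟫)
        (⟪Y s, -((s/2) • g (X s))⟫ + ⟪-((s/2) • g (X s)), Y s⟫) s := hY.inner ℝ hY
    have h5 := h1.add ((h4.const_mul (2:ℝ)))
    have : 2 * s * f (X s) + s^2 * ⟪g (X s), X' s⟫ +
        2 * (⟪Y s, -((s/2) • g (X s))⟫ + ⟪-((s/2) • g (X s)), Y s⟫)
        = 2*s*(f (X s) - ⟪g (X s), X s⟫) := by
      simp only [hYdef, inner_add_left, inner_add_right, inner_neg_left, inner_neg_right,
        real_inner_smul_left, real_inner_smul_right, real_inner_comm (X s) (g (X s)),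
        real_inner_comm (X' s) (g (X s))]
      ring
    rw [this] at h5
    exact h5
  -- E' ≤ 0 on (0, ∞)
  have hE'nonpos : ∀ s > (0:ℝ), 2*s*(f (X s) - ⟪g (X s), X s⟫) ≤ 0 := by
    intro s hs
    have := convex_grad_ineq d f hconv hf hf0 (X s)
    have h : f (X s) - ⟪g (X s), X s⟫ ≤ 0 := by simpa [hgdef] using sub_nonpos.mpr this
    have : 0 ≤ 2*s := by linarith
    exact mul_nonpos_of_nonneg_of_nonpos this h
  -- E is antitone on (0, ∞)
  have hanti : ∀ a b : ℝ, 0 < a → a ≤ b → E b ≤ E a := by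
    intro a b ha hab
    have hmem : ∀ u ∈ Icc a b, 0 < u := fun u hu => lt_of_lt_of_le ha hu.1
    have hderiv : ∀ u ∈ interior (Icc a b), deriv E u ≤ 0 := by
      intro u hu
      rw [interior_Icc] at hu
      have hu0 : 0 < u := lt_trans ha hu.1
      rw [(hE u hu0).deriv]
      exact hE'nonpos u hu0
    have hcont : ContinuousOn E (Icc a b) := fun u hu =>
      ((hE u (hmem u hu)).differentiableAt.continuousAt).continuousWithinAt
    have hdiff : DifferentiableOn ℝ E (interior (Icc a b)) := by
      intro u hu
      rw [interior_Icc] at hu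
      exact ((hE u (lt_trans ha hu.1)).differentiableAt).differentiableWithinAt
    exact antitoneOn_of_deriv_nonpos (convex_Icc a b) hcont hdiff hderiv
      (left_mem_Icc.mpr hab) (right_mem_Icc.mpr hab) hab
  -- limit of E at 0⁺
  have hXlim : Tendsto X (nhdsWithin 0 (Ioi 0)) (nhds X₀) := by
    have := (hXcont 0 (self_mem_Ici)).tendsto
    rw [hX0] at this
    exact this.mono_left (nhdsWithin_mono 0 Ioi_subset_Ici_self)
  have hslim : Tendsto (fun s : ℝ => s) (nhdsWithin 0 (Ioi 0)) (nhds 0) :=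
    tendsto_id.mono_left nhdsWithin_le_nhds
  have hYlim : Tendsto Y (nhdsWithin 0 (Ioi 0)) (nhds X₀) := by
    have h1 : Tendsto (fun s : ℝ => (s/2) • X' s) (nhdsWithin 0 (Ioi 0))
        (nhds (((0:ℝ)/2) • (0 : EuclideanSpace ℝ (Fin d)))) :=
      (hslim.div_const 2).smul hX'0
    simpa using hXlim.add h1
  have hElim : Tendsto E (nhdsWithin 0 (Ioi 0)) (nhds (2 * ‖X₀‖^2)) := by
    have hflim : Tendsto (fun s => f (X s)) (nhdsWithin 0 (Ioi 0)) (nhds (f X₀)) :=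
      (hf.continuous.tendsto X₀).comp hXlim
    have h1 : Tendsto (fun s : ℝ => s^2 * f (X s)) (nhdsWithin 0 (Ioi 0))
        (nhds ((0:ℝ)^2 * f X₀)) := ((hslim.pow 2)).mul hflim
    have h2 : Tendsto (fun s => ⟪Y s, Y s⟫) (nhdsWithin 0 (Ioi 0)) (nhds ⟪X₀, X₀⟫) :=
      hYlim.inner hYlim
    have h6 : Tendsto E (nhdsWithin 0 (Ioi 0)) (nhds ((0:ℝ)^2 * f X₀ + 2 * ⟪X₀, X₀⟫)) :=
      h1.add (h2.const_mul (2:ℝ))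
    have heq : (0:ℝ)^2 * f X₀ + 2 * ⟪X₀, X₀⟫ = 2 * ‖X₀‖^2 := by
      rw [real_inner_self_eq_norm_sq]; ring
    rwa [heq] at h6
  intro t ht
  -- E t ≤ 2‖X₀‖²
  have hEt : E t ≤ 2 * ‖X₀‖^2 := by
    refine ge_of_tendsto hElim ?_
    filter_upwards [Ioo_mem_nhdsGT_of_mem (by constructor <;> [rfl; exact ht] : (0:ℝ) ∈ Ico 0 t)]
      with s hs
    exact hanti s t hs.1 (le_of_lt hs.2)
  have hYnn : 0 ≤ ⟪Y t, Y t⟫ := real_inner_self_nonneg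
  have ht2 : t^2 * f (X t) ≤ 2 * ‖X₀‖^2 := by
    have : t^2 * f (X t) ≤ E t := by simp only [hEdef]; nlinarith
    linarith
  rw [le_div_iff₀ (by positivity : (0:ℝ) < t^2)]
  linarith [ht2, mul_comm (f (X t)) (t^2)]
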